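/- Let d > 1 with d = o(n), let X be a binomial random variable distributed as B(n, d/n), and let q ≥ 2d + 4. Define f_q(x) = 1/(q-x-1) if x ≤ q-2 and f_q(x) = 1 otherwise. Then E[f_q(X)] < 1/d. -/

import Mathlib

set_option maxHeartbeats 1000000

noncomputable def fqr (q : ℝ) (k : ℕ) : ℝ :=
  if (k : ℝ) ≤ q - 2 then 1 / (q - k - 1) else 1

open Finset in
lemma momgen : ∀ (j : ℕ) (x y : ℝ) (n : ℕ), j ≤ n →
    ∑ k ∈ range (n+1), (∏ i ∈ range j, ((k:ℝ) - i)) * (n.choose k : ℝ) * x^k * y^(n-k)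
    = (∏ i ∈ range j, ((n:ℝ) - i)) * x^j * (x+y)^(n-j) := by
  intro j
  induction j with
  | zero =>
    intro x y n _
    simp only [range_zero, prod_empty, one_mul, pow_zero, Nat.sub_zero, mul_one]
    rw [add_pow]
    exact Finset.sum_congr rfl fun k _ => by ring
  | succ j ih =>
    intro x y n hjn
    obtain ⟨m, rfl⟩ : ∃ m, n = m + 1 := ⟨n - 1, by omega⟩
    rw [Finset.sum_range_succ']
    have h0 : (∏ i ∈ range (j+1), (((0:ℕ):ℝ) - i)) * (((m+1).choose 0 : ℕ) : ℝ) * x^0 * y^(m+1-0) = 0 := by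
      rw [Finset.prod_range_succ']
      simp
    rw [h0, add_zero]
    have hterm : ∀ k ∈ range (m+1),
        (∏ i ∈ range (j+1), (((k+1:ℕ):ℝ) - i)) * (((m+1).choose (k+1) : ℕ) : ℝ) * x^(k+1) * y^(m+1-(k+1))
        = ((m:ℝ)+1) * x * ((∏ i ∈ range j, ((k:ℝ) - i)) * (m.choose k : ℝ) * x^k * y^(m-k)) := by
      intro k hk
      have hc : (m+1) * m.choose k = (m+1).choose (k+1) * (k+1) := Nat.add_one_mul_choose_eq m k
      have hc' : (((m+1).choose (k+1)) : ℝ) * ((k:ℝ)+1) = ((m:ℝ)+1) * (m.choose k : ℝ) := by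
        have h2 := congrArg (Nat.cast (R := ℝ)) hc
        push_cast at h2
        linarith [h2]
      have hprod : (∏ i ∈ range (j+1), (((k+1:ℕ):ℝ) - i)) = ((k:ℝ)+1) * ∏ i ∈ range j, ((k:ℝ) - i) := by
        rw [Finset.prod_range_succ',
          Finset.prod_congr rfl (fun i _ => show ((k+1:ℕ):ℝ) - ((i+1:ℕ):ℝ) = (k:ℝ) - i by push_cast; ring)]
        push_cast
        ring
      have hsub : m + 1 - (k+1) = m - k := by omega
      rw [hprod, hsub]
      push_cast
      linear_combination ((∏ i ∈ range j, ((k:ℝ) - i)) * x^(k+1) * y^(m-k)) * hc'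
    rw [Finset.sum_congr rfl hterm, ← Finset.mul_sum, ih x y m (by omega),
      show m + 1 - (j+1) = m - j by omega]
    have hprodn : (∏ i ∈ range (j+1), (((m+1:ℕ):ℝ) - i)) = ((m:ℝ)+1) * ∏ i ∈ range j, ((m:ℝ) - i) := by
      rw [Finset.prod_range_succ',
        Finset.prod_congr rfl (fun i _ => show ((m+1:ℕ):ℝ) - ((i+1:ℕ):ℝ) = (m:ℝ) - i by push_cast; ring)]
      push_cast
      ring
    rw [hprodn]
    ring


lemma pointwise (d q : ℝ) (hd : 1 < d) (hq : 2*d + 4 ≤ q) (k : ℕ) :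
    fqr q k ≤ ((q-d-1)^5 + (q-d-1)^4*((k:ℝ)-d) + (q-d-1)^3*((k:ℝ)-d)^2 + (q-d-1)^2*((k:ℝ)-d)^3
      + (q-d-1)*((k:ℝ)-d)^4 + ((k:ℝ)-d)^5 + ((k:ℝ)-d)^6) / (q-d-1)^6 := by
  set a : ℝ := q - d - 1 with ha
  set t : ℝ := (k:ℝ) - d with htdef
  have ha3 : d + 3 ≤ a := by simp [ha]; linarith
  have ha0 : (0:ℝ) < a := by linarith
  have ha6 : (0:ℝ) < a^6 := by positivity
  have ht6 : (0:ℝ) ≤ t^6 := by positivity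
  unfold fqr
  split_ifs with hk
  · -- 1/(q-k-1) ≤ Num/a^6
    have hu1 : (1:ℝ) ≤ q - k - 1 := by linarith
    have hu0 : (0:ℝ) < q - k - 1 := by linarith
    rw [div_le_div_iff₀ hu0 ha6]
    have hid : (a^5 + a^4*t + a^3*t^2 + a^2*t^3 + a*t^4 + t^5 + t^6) * (q - (k:ℝ) - 1)
        = a^6 + t^6 * ((q - (k:ℝ) - 1) - 1) := by
      rw [ha, htdef]; ring
    nlinarith [mul_nonneg ht6 (by linarith : (0:ℝ) ≤ (q - (k:ℝ) - 1) - 1)]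
  · -- 1 ≤ Num/a^6
    push_neg at hk
    have hta : a - 1 ≤ t := by rw [ha, htdef]; linarith
    have ha1 : (0:ℝ) ≤ a - 1 := by linarith
    rw [le_div_iff₀ ha6, one_mul]
    have base : a^5 + a^4*(a-1) + a^3*(a-1)^2 + a^2*(a-1)^3 + a*(a-1)^4 + (a-1)^5 + (a-1)^6 = a^6 := by
      ring
    calc a^6 = a^5 + a^4*(a-1) + a^3*(a-1)^2 + a^2*(a-1)^3 + a*(a-1)^4 + (a-1)^5 + (a-1)^6 := base.symm
      _ ≤ a^5 + a^4*t + a^3*t^2 + a^2*t^3 + a*t^4 + t^5 + t^6 := by gcongr <;> positivity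

lemma cert0 (s e : ℝ) (hs : (0:ℝ) ≤ s) (he : (0:ℝ) ≤ e) :
    (((4+s+e)^5 + (4+s+e)^3*(1+s) + (4+s+e)^2*(1+s) + (4+s+e)*(3*(1+s)^2+(1+s)) + 15*(1+s)^3 + 35*(1+s)^2 + 2*(1+s)) + 1) * (1+s)
    < (4+s+e)^6 := by
  have key : (4+s+e)^6 - ((((4+s+e)^5 + (4+s+e)^3*(1+s) + (4+s+e)^2*(1+s) + (4+s+e)*(3*(1+s)^2+(1+s)) + 15*(1+s)^3 + 35*(1+s)^2 + 2*(1+s)) + 1) * (1+s))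
      = 2923 + 4804*e^1 + 3187*e^2 + 1119*e^3 + 220*e^4 + 23*e^5 + 1*e^6 + 3406*s^1 + 4971*s^1*e^1 + 2691*s^1*e^2 + 718*s^1*e^3 + 95*s^1*e^4 + 5*s^1*e^5 + 1467*s^2 + 1959*s^2*e^1 + 821*s^2*e^2 + 149*s^2*e^3 + 10*s^2*e^4 + 280*s^3 + 365*s^3*e^1 + 107*s^3*e^2 + 10*s^3*e^3 + 27*s^4 + 32*s^4*e^1 + 5*s^4*e^2 + 2*s^5 + 1*s^5*e^1 := by ring
  nlinarith [mul_nonneg (pow_nonneg hs 0) (pow_nonneg he 1), mul_nonneg (pow_nonneg hs 0) (pow_nonneg he 2), mul_nonneg (pow_nonneg hs 0) (pow_nonneg he 3), mul_nonneg (pow_nonneg hs 0) (pow_nonneg he 4), mul_nonneg (pow_nonneg hs 0) (pow_nonneg he 5), mul_nonneg (pow_nonneg hs 0) (pow_nonneg he 6), mul_nonneg (pow_nonneg hs 1) (pow_nonneg he 0), mul_nonneg (pow_nonneg hs 1) (pow_nonneg he 1), mul_nonneg (pow_nonneg hs 1) (pow_nonneg he 2), mul_nonneg (pow_nonneg hs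 1) (pow_nonneg he 3), mul_nonneg (pow_nonneg hs 1) (pow_nonneg he 4), mul_nonneg (pow_nonneg hs 1) (pow_nonneg he 5), mul_nonneg (pow_nonneg hs 2) (pow_nonneg he 0), mul_nonneg (pow_nonneg hs 2) (pow_nonneg he 1), mul_nonneg (pow_nonneg hs 2) (pow_nonneg he 2), mul_nonneg (pow_nonneg hs 2) (pow_nonneg he 3), mul_nonneg (pow_nonneg hs 2) (pow_nonneg he 4), mul_nonneg (pow_nonneg hs 3) (pow_nonneg he 0), mul_nonneg (pow_nonneg hs 3) (pow_nonneg he 1), mul_nonneg (pow_nonneg hs 3) (pow_nonneg he 2), mul_nonneg (pow_nonneg hs 3) (pow_nonneg he 3), mul_nonneg (pow_nonneg hs 4) (pow_nonneg he 0), mul_nonneg (pow_nonneg hs 4) (pow_nonneg he 1), mul_nonneg (pow_nonneg hs 4) (pow_nonneg he 2), mul_nonneg (pow_nonneg hs 5) (pow_nonneg he 0), mul_nonneg (pow_nonneg hs 5) (pow_nonneg he 1)]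

lemma core (d a : ℝ) (n : ℕ) (hd : 1 < d) (ha : d + 3 ≤ a)
    (hn16 : (16:ℝ) ≤ (n:ℝ)) (hdn : d ≤ (n:ℝ))
    (hQn : 15*(125*d^3 + 180*d^4 + 135*d^5 + 26*d^6 + 12*a*d^3 + 4*a*d^4 + 3*a^2*d^3) < (n:ℝ)) :
    ∑ k ∈ Finset.range (n+1), (a^5 + a^4*((k:ℝ)-d) + a^3*((k:ℝ)-d)^2 + a^2*((k:ℝ)-d)^3 + a*((k:ℝ)-d)^4 + ((k:ℝ)-d)^5 + ((k:ℝ)-d)^6) * (((n.choose k : ℕ) : ℝ) * (d/(n:ℝ))^k * (1 - d/(n:ℝ))^(n-k)) < a^6 / d := by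
  have hd0 : (0:ℝ) < d := by linarith
  have hn0 : (0:ℝ) < (n:ℝ) := by linarith
  have hnne : ((n:ℝ)) ≠ 0 := ne_of_gt hn0
  have ha0 : (0:ℝ) < a := by linarith
  have h16n : (0:ℝ) ≤ (n:ℝ) - 16 := by linarith
  have hone : d/(n:ℝ) + (1 - d/(n:ℝ)) = 1 := by ring
  have hn6 : 6 ≤ n := by exact_mod_cast le_trans (by norm_num : (6:ℝ) ≤ 16) hn16
  have hM0 : ∑ k ∈ Finset.range (n+1), (∏ i ∈ Finset.range 0, ((k:ℝ) - (i:ℝ))) * ((n.choose k : ℕ) : ℝ) * (d/(n:ℝ))^k * (1 - d/(n:ℝ))^(n-k) = (∏ i ∈ Finset.range 0, ((n:ℝ) - (i:ℝ))) * (d/(n:ℝ))^0 := by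
    rw [momgen 0 (d/(n:ℝ)) (1 - d/(n:ℝ)) n (by omega), hone, one_pow, mul_one]
  have hM1 : ∑ k ∈ Finset.range (n+1), (∏ i ∈ Finset.range 1, ((k:ℝ) - (i:ℝ))) * ((n.choose k : ℕ) : ℝ) * (d/(n:ℝ))^k * (1 - d/(n:ℝ))^(n-k) = (∏ i ∈ Finset.range 1, ((n:ℝ) - (i:ℝ))) * (d/(n:ℝ))^1 := by
    rw [momgen 1 (d/(n:ℝ)) (1 - d/(n:ℝ)) n (by omega), hone, one_pow, mul_one]
  have hM2 : ∑ k ∈ Finset.range (n+1), (∏ i ∈ Finset.range 2, ((k:ℝ) - (i:ℝ))) * ((n.choose k : ℕ) : ℝ) * (d/(n:ℝ))^k * (1 - d/(n:ℝ))^(n-k) = (∏ i ∈ Finset.range 2, ((n:ℝ) - (i:ℝ))) * (d/(n:ℝ))^2 := by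
    rw [momgen 2 (d/(n:ℝ)) (1 - d/(n:ℝ)) n (by omega), hone, one_pow, mul_one]
  have hM3 : ∑ k ∈ Finset.range (n+1), (∏ i ∈ Finset.range 3, ((k:ℝ) - (i:ℝ))) * ((n.choose k : ℕ) : ℝ) * (d/(n:ℝ))^k * (1 - d/(n:ℝ))^(n-k) = (∏ i ∈ Finset.range 3, ((n:ℝ) - (i:ℝ))) * (d/(n:ℝ))^3 := by
    rw [momgen 3 (d/(n:ℝ)) (1 - d/(n:ℝ)) n (by omega), hone, one_pow, mul_one]
  have hM4 : ∑ k ∈ Finset.range (n+1), (∏ i ∈ Finset.range 4, ((k:ℝ) - (i:ℝ))) * ((n.choose k : ℕ) : ℝ) * (d/(n:ℝ))^k * (1 - d/(n:ℝ))^(n-k) = (∏ i ∈ Finset.range 4, ((n:ℝ) - (i:ℝ))) * (d/(n:ℝ))^4 := by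
    rw [momgen 4 (d/(n:ℝ)) (1 - d/(n:ℝ)) n (by omega), hone, one_pow, mul_one]
  have hM5 : ∑ k ∈ Finset.range (n+1), (∏ i ∈ Finset.range 5, ((k:ℝ) - (i:ℝ))) * ((n.choose k : ℕ) : ℝ) * (d/(n:ℝ))^k * (1 - d/(n:ℝ))^(n-k) = (∏ i ∈ Finset.range 5, ((n:ℝ) - (i:ℝ))) * (d/(n:ℝ))^5 := by
    rw [momgen 5 (d/(n:ℝ)) (1 - d/(n:ℝ)) n (by omega), hone, one_pow, mul_one]
  have hM6 : ∑ k ∈ Finset.range (n+1), (∏ i ∈ Finset.range 6, ((k:ℝ) - (i:ℝ))) * ((n.choose k : ℕ) : ℝ) * (d/(n:ℝ))^k * (1 - d/(n:ℝ))^(n-k) = (∏ i ∈ Finset.range 6, ((n:ℝ) - (i:ℝ))) * (d/(n:ℝ))^6 := by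
    rw [momgen 6 (d/(n:ℝ)) (1 - d/(n:ℝ)) n (by omega), hone, one_pow, mul_one]
  have hptw : ∀ k ∈ Finset.range (n+1), (a^5 + a^4*((k:ℝ)-d) + a^3*((k:ℝ)-d)^2 + a^2*((k:ℝ)-d)^3 + a*((k:ℝ)-d)^4 + ((k:ℝ)-d)^5 + ((k:ℝ)-d)^6) * (((n.choose k : ℕ) : ℝ) * (d/(n:ℝ))^k * (1 - d/(n:ℝ))^(n-k))
      = (a^5 - a^4*d + a^3*d^2 - a^2*d^3 + a*d^4 - d^5 + d^6) * ((∏ i ∈ Finset.range 0, ((k:ℝ) - (i:ℝ))) * ((n.choose k : ℕ) : ℝ) * (d/(n:ℝ))^k * (1 - d/(n:ℝ))^(n-k)) + (2 - 11*d + 25*d^2 - 30*d^3 + 20*d^4 - 6*d^5 + a*(1-4*d+6*d^2-4*d^3) + a^2*(1-3*d+3*d^2) + a^3*(1-2*d) + a^4) * ((∏ i ∈ Finset.range 1, ((k:ℝ) - (i:ℝ))) * ((n.choose k : ℕ) : ℝ) * (d/(n:ℝ))^k * (1 - d/(n:ℝ))^(n-k)) + (46 - 125*d + 135*d^2 - 70*d^3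 + 15*d^4 + a*(7-12*d+6*d^2) + a^2*(3-3*d) + a^3) * ((∏ i ∈ Finset.range 2, ((k:ℝ) - (i:ℝ))) * ((n.choose k : ℕ) : ℝ) * (d/(n:ℝ))^k * (1 - d/(n:ℝ))^(n-k)) + (115 - 180*d + 100*d^2 - 20*d^3 + a*(6-4*d) + a^2) * ((∏ i ∈ Finset.range 3, ((k:ℝ) - (i:ℝ))) * ((n.choose k : ℕ) : ℝ) * (d/(n:ℝ))^k * (1 - d/(n:ℝ))^(n-k)) + (75 - 65*d + 15*d^2 + a) * ((∏ i ∈ Finset.range 4, ((k:ℝ) - (i:ℝ))) * ((n.choose k : ℕ) : ℝ) * (d/(n:ℝ))^k * (1 - d/(n:ℝ))^(n-k)) + (16 - 6*d) * ((∏ i ∈ Finset.range 5, ((k:ℝ) - (i:ℝ))) * ((n.choose k : ℕ) : ℝ) * (d/(n:ℝ))^k * (1 - d/(n:ℝ))^(n-k)) + (1:ℝ) * ((∏ i ∈ Finset.range 6, ((k:ℝ) - (i:ℝ))) * ((n.choose k : ℕ) : ℝ) * (d/(n:ℝ))^k * (1 - d/(n:ℝ))^(n-k)) := by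
    intro k _
    simp only [Finset.prod_range_succ, Finset.prod_range_zero]
    push_cast
    ring
  rw [Finset.sum_congr rfl hptw]
  rw [Finset.sum_add_distrib, Finset.sum_add_distrib, Finset.sum_add_distrib, Finset.sum_add_distrib, Finset.sum_add_distrib, Finset.sum_add_distrib]
  rw [← Finset.mul_sum, ← Finset.mul_sum, ← Finset.mul_sum, ← Finset.mul_sum, ← Finset.mul_sum, ← Finset.mul_sum, ← Finset.mul_sum]
  rw [hM0, hM1, hM2, hM3, hM4, hM5, hM6]
  clear hM0 hM1 hM2 hM3 hM4 hM5 hM6 hptw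
  have hR0 : (∏ i ∈ Finset.range 0, ((n:ℝ) - (i:ℝ))) * (d/(n:ℝ))^0 = 1 := by simp
  have hR1 : (∏ i ∈ Finset.range 1, ((n:ℝ) - (i:ℝ))) * (d/(n:ℝ))^1 = d := by
    simp only [Finset.prod_range_succ, Finset.prod_range_zero, Nat.cast_zero, sub_zero, one_mul, pow_one]
    field_simp
  rw [hR0, hR1]
  have hPup2 : (((n:ℝ) - 0)*((n:ℝ) - 1)) ≤ ((n:ℝ))^2 := by linarith [mul_nonneg (pow_nonneg hn0.le 0) h16n, mul_nonneg (pow_nonneg hn0.le 1) h16n, pow_nonneg hn0.le 1, hn0.le]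
  have hPlo2 : ((n:ℝ))^2 ≤ (((n:ℝ) - 0)*((n:ℝ) - 1)) + 15*((n:ℝ))^1 := by linarith [mul_nonneg (pow_nonneg hn0.le 0) h16n, mul_nonneg (pow_nonneg hn0.le 1) h16n, pow_nonneg hn0.le 1, hn0.le]
  have hRid2 : (∏ i ∈ Finset.range 2, ((n:ℝ) - (i:ℝ))) * (d/(n:ℝ))^2 = (((n:ℝ) - 0)*((n:ℝ) - 1)) * d^2 / ((n:ℝ))^2 := by
    simp only [Finset.prod_range_succ, Finset.prod_range_zero]
    push_cast
    rw [div_pow]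
    ring
  have hup2 : (∏ i ∈ Finset.range 2, ((n:ℝ) - (i:ℝ))) * (d/(n:ℝ))^2 ≤ d^2 := by
    rw [hRid2, div_le_iff₀ (by positivity : (0:ℝ) < ((n:ℝ))^2)]
    linarith [mul_le_mul_of_nonneg_right hPup2 (pow_nonneg hd0.le 2)]
  have hlo2 : d^2 - (∏ i ∈ Finset.range 2, ((n:ℝ) - (i:ℝ))) * (d/(n:ℝ))^2 ≤ 15*d^2/(n:ℝ) := by
    rw [hRid2, sub_le_iff_le_add, div_add_div _ _ hnne (by positivity : ((n:ℝ))^2 ≠ 0),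
      le_div_iff₀ (by positivity : (0:ℝ) < (n:ℝ) * ((n:ℝ))^2)]
    linarith [mul_le_mul_of_nonneg_right hPlo2 (mul_nonneg (pow_nonneg hd0.le 2) hn0.le)]
  have hPup3 : (((n:ℝ) - 0)*((n:ℝ) - 1)*((n:ℝ) - 2)) ≤ ((n:ℝ))^3 := by linarith [mul_nonneg (pow_nonneg hn0.le 0) h16n, mul_nonneg (pow_nonneg hn0.le 1) h16n, mul_nonneg (pow_nonneg hn0.le 2) h16n, pow_nonneg hn0.le 1, pow_nonneg hn0.le 2, hn0.le]
  have hPlo3 : ((n:ℝ))^3 ≤ (((n:ℝ) - 0)*((n:ℝ) - 1)*((n:ℝ) - 2)) + 15*((n:ℝ))^2 := by linarith [mul_nonneg (pow_nonneg hn0.le 0) h16n, mul_nonneg (pow_nonneg hn0.le 1) h16n, mul_nonneg (pow_nonneg hn0.le 2) h16n, pow_nonneg hn0.le 1, pow_nonneg hn0.le 2, hn0.le]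
  have hRid3 : (∏ i ∈ Finset.range 3, ((n:ℝ) - (i:ℝ))) * (d/(n:ℝ))^3 = (((n:ℝ) - 0)*((n:ℝ) - 1)*((n:ℝ) - 2)) * d^3 / ((n:ℝ))^3 := by
    simp only [Finset.prod_range_succ, Finset.prod_range_zero]
    push_cast
    rw [div_pow]
    ring
  have hup3 : (∏ i ∈ Finset.range 3, ((n:ℝ) - (i:ℝ))) * (d/(n:ℝ))^3 ≤ d^3 := by
    rw [hRid3, div_le_iff₀ (by positivity : (0:ℝ) < ((n:ℝ))^3)]
    linarith [mul_le_mul_of_nonneg_right hPup3 (pow_nonneg hd0.le 3)]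
  have hlo3 : d^3 - (∏ i ∈ Finset.range 3, ((n:ℝ) - (i:ℝ))) * (d/(n:ℝ))^3 ≤ 15*d^3/(n:ℝ) := by
    rw [hRid3, sub_le_iff_le_add, div_add_div _ _ hnne (by positivity : ((n:ℝ))^3 ≠ 0),
      le_div_iff₀ (by positivity : (0:ℝ) < (n:ℝ) * ((n:ℝ))^3)]
    linarith [mul_le_mul_of_nonneg_right hPlo3 (mul_nonneg (pow_nonneg hd0.le 3) hn0.le)]
  have hPup4 : (((n:ℝ) - 0)*((n:ℝ) - 1)*((n:ℝ) - 2)*((n:ℝ) - 3)) ≤ ((n:ℝ))^4 := by linarith [mul_nonneg (pow_nonneg hn0.le 0) h16n, mul_nonneg (pow_nonneg hn0.le 1) h16n, mul_nonneg (pow_nonneg hn0.le 2) h16n, mul_nonneg (pow_nonneg hn0.le 3) h16n, pow_nonneg hn0.le 1, pow_nonneg hn0.le 2, pow_nonneg hn0.le 3, hn0.le]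
  have hPlo4 : ((n:ℝ))^4 ≤ (((n:ℝ) - 0)*((n:ℝ) - 1)*((n:ℝ) - 2)*((n:ℝ) - 3)) + 15*((n:ℝ))^3 := by linarith [mul_nonneg (pow_nonneg hn0.le 0) h16n, mul_nonneg (pow_nonneg hn0.le 1) h16n, mul_nonneg (pow_nonneg hn0.le 2) h16n, mul_nonneg (pow_nonneg hn0.le 3) h16n, pow_nonneg hn0.le 1, pow_nonneg hn0.le 2, pow_nonneg hn0.le 3, hn0.le]
  have hRid4 : (∏ i ∈ Finset.range 4, ((n:ℝ) - (i:ℝ))) * (d/(n:ℝ))^4 = (((n:ℝ) - 0)*((n:ℝ) - 1)*((n:ℝ) - 2)*((n:ℝ) - 3)) * d^4 / ((n:ℝ))^4 := by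
    simp only [Finset.prod_range_succ, Finset.prod_range_zero]
    push_cast
    rw [div_pow]
    ring
  have hup4 : (∏ i ∈ Finset.range 4, ((n:ℝ) - (i:ℝ))) * (d/(n:ℝ))^4 ≤ d^4 := by
    rw [hRid4, div_le_iff₀ (by positivity : (0:ℝ) < ((n:ℝ))^4)]
    linarith [mul_le_mul_of_nonneg_right hPup4 (pow_nonneg hd0.le 4)]
  have hlo4 : d^4 - (∏ i ∈ Finset.range 4, ((n:ℝ) - (i:ℝ))) * (d/(n:ℝ))^4 ≤ 15*d^4/(n:ℝ) := by
    rw [hRid4, sub_le_iff_le_add, div_add_div _ _ hnne (by positivity : ((n:ℝ))^4 ≠ 0),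
      le_div_iff₀ (by positivity : (0:ℝ) < (n:ℝ) * ((n:ℝ))^4)]
    linarith [mul_le_mul_of_nonneg_right hPlo4 (mul_nonneg (pow_nonneg hd0.le 4) hn0.le)]
  have hPup5 : (((n:ℝ) - 0)*((n:ℝ) - 1)*((n:ℝ) - 2)*((n:ℝ) - 3)*((n:ℝ) - 4)) ≤ ((n:ℝ))^5 := by linarith [mul_nonneg (pow_nonneg hn0.le 0) h16n, mul_nonneg (pow_nonneg hn0.le 1) h16n, mul_nonneg (pow_nonneg hn0.le 2) h16n, mul_nonneg (pow_nonneg hn0.le 3) h16n, mul_nonneg (pow_nonneg hn0.le 4) h16n, pow_nonneg hn0.le 1, pow_nonneg hn0.le 2, pow_nonneg hn0.le 3, pow_nonneg hn0.le 4, hn0.le]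
  have hPlo5 : ((n:ℝ))^5 ≤ (((n:ℝ) - 0)*((n:ℝ) - 1)*((n:ℝ) - 2)*((n:ℝ) - 3)*((n:ℝ) - 4)) + 15*((n:ℝ))^4 := by linarith [mul_nonneg (pow_nonneg hn0.le 0) h16n, mul_nonneg (pow_nonneg hn0.le 1) h16n, mul_nonneg (pow_nonneg hn0.le 2) h16n, mul_nonneg (pow_nonneg hn0.le 3) h16n, mul_nonneg (pow_nonneg hn0.le 4) h16n, pow_nonneg hn0.le 1, pow_nonneg hn0.le 2, pow_nonneg hn0.le 3, pow_nonneg hn0.le 4, hn0.le]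
  have hRid5 : (∏ i ∈ Finset.range 5, ((n:ℝ) - (i:ℝ))) * (d/(n:ℝ))^5 = (((n:ℝ) - 0)*((n:ℝ) - 1)*((n:ℝ) - 2)*((n:ℝ) - 3)*((n:ℝ) - 4)) * d^5 / ((n:ℝ))^5 := by
    simp only [Finset.prod_range_succ, Finset.prod_range_zero]
    push_cast
    rw [div_pow]
    ring
  have hup5 : (∏ i ∈ Finset.range 5, ((n:ℝ) - (i:ℝ))) * (d/(n:ℝ))^5 ≤ d^5 := by
    rw [hRid5, div_le_iff₀ (by positivity : (0:ℝ) < ((n:ℝ))^5)]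
    linarith [mul_le_mul_of_nonneg_right hPup5 (pow_nonneg hd0.le 5)]
  have hlo5 : d^5 - (∏ i ∈ Finset.range 5, ((n:ℝ) - (i:ℝ))) * (d/(n:ℝ))^5 ≤ 15*d^5/(n:ℝ) := by
    rw [hRid5, sub_le_iff_le_add, div_add_div _ _ hnne (by positivity : ((n:ℝ))^5 ≠ 0),
      le_div_iff₀ (by positivity : (0:ℝ) < (n:ℝ) * ((n:ℝ))^5)]
    linarith [mul_le_mul_of_nonneg_right hPlo5 (mul_nonneg (pow_nonneg hd0.le 5) hn0.le)]
  have hPup6 : (((n:ℝ) - 0)*((n:ℝ) - 1)*((n:ℝ) - 2)*((n:ℝ) - 3)*((n:ℝ) - 4)*((n:ℝ) - 5)) ≤ ((n:ℝ))^6 := by linarith [mul_nonneg (pow_nonneg hn0.le 0) h16n, mul_nonneg (pow_nonneg hn0.le 1) h16n, mul_nonneg (pow_nonneg hn0.le 2) h16n, mul_nonneg (pow_nonneg hn0.le 3) h16n, mul_nonneg (pow_nonneg hn0.le 4) h16n, mul_nonneg (pow_nonneg hn0.le 5) h16n, pow_nonneg hn0.le 1, pow_nonneg hn0.le 2, pow_nonneg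 hn0.le 3, pow_nonneg hn0.le 4, pow_nonneg hn0.le 5, hn0.le]
  have hPlo6 : ((n:ℝ))^6 ≤ (((n:ℝ) - 0)*((n:ℝ) - 1)*((n:ℝ) - 2)*((n:ℝ) - 3)*((n:ℝ) - 4)*((n:ℝ) - 5)) + 15*((n:ℝ))^5 := by linarith [mul_nonneg (pow_nonneg hn0.le 0) h16n, mul_nonneg (pow_nonneg hn0.le 1) h16n, mul_nonneg (pow_nonneg hn0.le 2) h16n, mul_nonneg (pow_nonneg hn0.le 3) h16n, mul_nonneg (pow_nonneg hn0.le 4) h16n, mul_nonneg (pow_nonneg hn0.le 5) h16n, pow_nonneg hn0.le 1, pow_nonneg hn0.le 2, pow_nonneg hn0.le 3, pow_nonneg hn0.le 4, pow_nonneg hn0.le 5, hn0.le]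
  have hRid6 : (∏ i ∈ Finset.range 6, ((n:ℝ) - (i:ℝ))) * (d/(n:ℝ))^6 = (((n:ℝ) - 0)*((n:ℝ) - 1)*((n:ℝ) - 2)*((n:ℝ) - 3)*((n:ℝ) - 4)*((n:ℝ) - 5)) * d^6 / ((n:ℝ))^6 := by
    simp only [Finset.prod_range_succ, Finset.prod_range_zero]
    push_cast
    rw [div_pow]
    ring
  have hup6 : (∏ i ∈ Finset.range 6, ((n:ℝ) - (i:ℝ))) * (d/(n:ℝ))^6 ≤ d^6 := by
    rw [hRid6, div_le_iff₀ (by positivity : (0:ℝ) < ((n:ℝ))^6)]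
    linarith [mul_le_mul_of_nonneg_right hPup6 (pow_nonneg hd0.le 6)]
  have hlo6 : d^6 - (∏ i ∈ Finset.range 6, ((n:ℝ) - (i:ℝ))) * (d/(n:ℝ))^6 ≤ 15*d^6/(n:ℝ) := by
    rw [hRid6, sub_le_iff_le_add, div_add_div _ _ hnne (by positivity : ((n:ℝ))^6 ≠ 0),
      le_div_iff₀ (by positivity : (0:ℝ) < (n:ℝ) * ((n:ℝ))^6)]
    linarith [mul_le_mul_of_nonneg_right hPlo6 (mul_nonneg (pow_nonneg hd0.le 6) hn0.le)]
  have hQ02 : (0:ℝ) ≤ (125*d + 70*d^3 + 12*a*d + 3*a^2*d) := by linarith [ha0.le, hd0.le, mul_nonneg ha0.le hd0.le, mul_nonneg (mul_nonneg ha0.le ha0.le) hd0.le, mul_nonneg ha0.le (mul_nonneg hd0.le hd0.le), mul_nonneg (mul_nonneg ha0.le ha0.le) (mul_nonneg ha0.le hd0.le), mul_nonneg hd0.le hd0.le, mul_nonneg (mul_nonneg hd0.le hd0.le) hd0.le, mul_nonneg (mul_nonneg hd0.le hd0.le) (mul_nonneg hd0.le hd0.le), mul_nonneg (mul_nonneg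 ha0.le ha0.le) ha0.le, mul_nonneg ha0.le ha0.le, mul_nonneg (mul_nonneg ha0.le hd0.le) hd0.le]
  have hwQ2 : (0:ℝ) ≤ (46 - 125*d + 135*d^2 - 70*d^3 + 15*d^4 + a*(7-12*d+6*d^2) + a^2*(3-3*d) + a^3) + (125*d + 70*d^3 + 12*a*d + 3*a^2*d) := by linarith [ha0.le, hd0.le, mul_nonneg ha0.le hd0.le, mul_nonneg (mul_nonneg ha0.le ha0.le) hd0.le, mul_nonneg ha0.le (mul_nonneg hd0.le hd0.le), mul_nonneg (mul_nonneg ha0.le ha0.le) (mul_nonneg ha0.le hd0.le), mul_nonneg hd0.le hd0.le, mul_nonneg (mul_nonneg hd0.le hd0.le) hd0.le, mul_nonneg (mul_nonneg hd0.le hd0.le) (mul_nonneg hd0.le hd0.le), mul_nonneg (mul_nonneg ha0.le ha0.le) ha0.le, mul_nonneg ha0.le ha0.le, mul_nonneg (mul_nonneg ha0.le hd0.le) hd0.le]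
  have hterm2 : (46 - 125*d + 135*d^2 - 70*d^3 + 15*d^4 + a*(7-12*d+6*d^2) + a^2*(3-3*d) + a^3) * ((∏ i ∈ Finset.range 2, ((n:ℝ) - (i:ℝ))) * (d/(n:ℝ))^2) ≤ (46 - 125*d + 135*d^2 - 70*d^3 + 15*d^4 + a*(7-12*d+6*d^2) + a^2*(3-3*d) + a^3) * d^2 + (125*d + 70*d^3 + 12*a*d + 3*a^2*d) * (15*d^2/(n:ℝ)) := by
    have h1 : (0:ℝ) ≤ ((46 - 125*d + 135*d^2 - 70*d^3 + 15*d^4 + a*(7-12*d+6*d^2) + a^2*(3-3*d) + a^3) + (125*d + 70*d^3 + 12*a*d + 3*a^2*d)) * (d^2 - (∏ i ∈ Finset.range 2, ((n:ℝ) - (i:ℝ))) * (d/(n:ℝ))^2) :=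
      mul_nonneg hwQ2 (by linarith [hup2])
    have h2 := mul_le_mul_of_nonneg_left hlo2 hQ02
    linarith [h1, h2]
  have hQ03 : (0:ℝ) ≤ (180*d + 20*d^3 + 4*a*d) := by linarith [ha0.le, hd0.le, mul_nonneg ha0.le hd0.le, mul_nonneg (mul_nonneg ha0.le ha0.le) hd0.le, mul_nonneg ha0.le (mul_nonneg hd0.le hd0.le), mul_nonneg (mul_nonneg ha0.le ha0.le) (mul_nonneg ha0.le hd0.le), mul_nonneg hd0.le hd0.le, mul_nonneg (mul_nonneg hd0.le hd0.le) hd0.le, mul_nonneg (mul_nonneg hd0.le hd0.le) (mul_nonneg hd0.le hd0.le), mul_nonneg (mul_nonneg ha0.le ha0.le) ha0.le, mul_nonneg ha0.le ha0.le, mul_nonneg (mul_nonneg ha0.le hd0.le) hd0.le]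
  have hwQ3 : (0:ℝ) ≤ (115 - 180*d + 100*d^2 - 20*d^3 + a*(6-4*d) + a^2) + (180*d + 20*d^3 + 4*a*d) := by linarith [ha0.le, hd0.le, mul_nonneg ha0.le hd0.le, mul_nonneg (mul_nonneg ha0.le ha0.le) hd0.le, mul_nonneg ha0.le (mul_nonneg hd0.le hd0.le), mul_nonneg (mul_nonneg ha0.le ha0.le) (mul_nonneg ha0.le hd0.le), mul_nonneg hd0.le hd0.le, mul_nonneg (mul_nonneg hd0.le hd0.le) hd0.le, mul_nonneg (mul_nonneg hd0.le hd0.le) (mul_nonneg hd0.le hd0.le), mul_nonneg (mul_nonneg ha0.le ha0.le) ha0.le, mul_nonneg ha0.le ha0.le, mul_nonneg (mul_nonneg ha0.le hd0.le) hd0.le]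
  have hterm3 : (115 - 180*d + 100*d^2 - 20*d^3 + a*(6-4*d) + a^2) * ((∏ i ∈ Finset.range 3, ((n:ℝ) - (i:ℝ))) * (d/(n:ℝ))^3) ≤ (115 - 180*d + 100*d^2 - 20*d^3 + a*(6-4*d) + a^2) * d^3 + (180*d + 20*d^3 + 4*a*d) * (15*d^3/(n:ℝ)) := by
    have h1 : (0:ℝ) ≤ ((115 - 180*d + 100*d^2 - 20*d^3 + a*(6-4*d) + a^2) + (180*d + 20*d^3 + 4*a*d)) * (d^3 - (∏ i ∈ Finset.range 3, ((n:ℝ) - (i:ℝ))) * (d/(n:ℝ))^3) :=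
      mul_nonneg hwQ3 (by linarith [hup3])
    have h2 := mul_le_mul_of_nonneg_left hlo3 hQ03
    linarith [h1, h2]
  have hQ04 : (0:ℝ) ≤ (65*d) := by linarith [ha0.le, hd0.le, mul_nonneg ha0.le hd0.le, mul_nonneg (mul_nonneg ha0.le ha0.le) hd0.le, mul_nonneg ha0.le (mul_nonneg hd0.le hd0.le), mul_nonneg (mul_nonneg ha0.le ha0.le) (mul_nonneg ha0.le hd0.le), mul_nonneg hd0.le hd0.le, mul_nonneg (mul_nonneg hd0.le hd0.le) hd0.le, mul_nonneg (mul_nonneg hd0.le hd0.le) (mul_nonneg hd0.le hd0.le), mul_nonneg (mul_nonneg ha0.le ha0.le) ha0.le, mul_nonneg ha0.le ha0.le, mul_nonneg (mul_nonneg ha0.le hd0.le) hd0.le]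
  have hwQ4 : (0:ℝ) ≤ (75 - 65*d + 15*d^2 + a) + (65*d) := by linarith [ha0.le, hd0.le, mul_nonneg ha0.le hd0.le, mul_nonneg (mul_nonneg ha0.le ha0.le) hd0.le, mul_nonneg ha0.le (mul_nonneg hd0.le hd0.le), mul_nonneg (mul_nonneg ha0.le ha0.le) (mul_nonneg ha0.le hd0.le), mul_nonneg hd0.le hd0.le, mul_nonneg (mul_nonneg hd0.le hd0.le) hd0.le, mul_nonneg (mul_nonneg hd0.le hd0.le) (mul_nonneg hd0.le hd0.le), mul_nonneg (mul_nonneg ha0.le ha0.le) ha0.le, mul_nonneg ha0.le ha0.le, mul_nonneg (mul_nonneg ha0.le hd0.le) hd0.le]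
  have hterm4 : (75 - 65*d + 15*d^2 + a) * ((∏ i ∈ Finset.range 4, ((n:ℝ) - (i:ℝ))) * (d/(n:ℝ))^4) ≤ (75 - 65*d + 15*d^2 + a) * d^4 + (65*d) * (15*d^4/(n:ℝ)) := by
    have h1 : (0:ℝ) ≤ ((75 - 65*d + 15*d^2 + a) + (65*d)) * (d^4 - (∏ i ∈ Finset.range 4, ((n:ℝ) - (i:ℝ))) * (d/(n:ℝ))^4) :=
      mul_nonneg hwQ4 (by linarith [hup4])
    have h2 := mul_le_mul_of_nonneg_left hlo4 hQ04
    linarith [h1, h2]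
  have hQ05 : (0:ℝ) ≤ (6*d) := by linarith [ha0.le, hd0.le, mul_nonneg ha0.le hd0.le, mul_nonneg (mul_nonneg ha0.le ha0.le) hd0.le, mul_nonneg ha0.le (mul_nonneg hd0.le hd0.le), mul_nonneg (mul_nonneg ha0.le ha0.le) (mul_nonneg ha0.le hd0.le), mul_nonneg hd0.le hd0.le, mul_nonneg (mul_nonneg hd0.le hd0.le) hd0.le, mul_nonneg (mul_nonneg hd0.le hd0.le) (mul_nonneg hd0.le hd0.le), mul_nonneg (mul_nonneg ha0.le ha0.le) ha0.le, mul_nonneg ha0.le ha0.le, mul_nonneg (mul_nonneg ha0.le hd0.le) hd0.le]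
  have hwQ5 : (0:ℝ) ≤ (16 - 6*d) + (6*d) := by linarith [ha0.le, hd0.le, mul_nonneg ha0.le hd0.le, mul_nonneg (mul_nonneg ha0.le ha0.le) hd0.le, mul_nonneg ha0.le (mul_nonneg hd0.le hd0.le), mul_nonneg (mul_nonneg ha0.le ha0.le) (mul_nonneg ha0.le hd0.le), mul_nonneg hd0.le hd0.le, mul_nonneg (mul_nonneg hd0.le hd0.le) hd0.le, mul_nonneg (mul_nonneg hd0.le hd0.le) (mul_nonneg hd0.le hd0.le), mul_nonneg (mul_nonneg ha0.le ha0.le) ha0.le, mul_nonneg ha0.le ha0.le, mul_nonneg (mul_nonneg ha0.le hd0.le) hd0.le]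
  have hterm5 : (16 - 6*d) * ((∏ i ∈ Finset.range 5, ((n:ℝ) - (i:ℝ))) * (d/(n:ℝ))^5) ≤ (16 - 6*d) * d^5 + (6*d) * (15*d^5/(n:ℝ)) := by
    have h1 : (0:ℝ) ≤ ((16 - 6*d) + (6*d)) * (d^5 - (∏ i ∈ Finset.range 5, ((n:ℝ) - (i:ℝ))) * (d/(n:ℝ))^5) :=
      mul_nonneg hwQ5 (by linarith [hup5])
    have h2 := mul_le_mul_of_nonneg_left hlo5 hQ05
    linarith [h1, h2]
  have hQQn : 15*(125*d^3 + 180*d^4 + 135*d^5 + 26*d^6 + 12*a*d^3 + 4*a*d^4 + 3*a^2*d^3)/(n:ℝ) < 1 := by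
    rw [div_lt_one hn0]; exact hQn
  have hQsum : (125*d + 70*d^3 + 12*a*d + 3*a^2*d) * (15*d^2/(n:ℝ)) + (180*d + 20*d^3 + 4*a*d) * (15*d^3/(n:ℝ)) + (65*d) * (15*d^4/(n:ℝ)) + (6*d) * (15*d^5/(n:ℝ))
      = 15*(125*d^3 + 180*d^4 + 135*d^5 + 26*d^6 + 12*a*d^3 + 4*a*d^4 + 3*a^2*d^3)/(n:ℝ) := by
    field_simp
    ring
  have hcert : ((a^5 + a^3*d + a^2*d + a*(3*d^2+d) + 15*d^3 + 35*d^2 + 2*d) + 1) * d < a^6 := by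
    have h := cert0 (d-1) (a-d-3) (by linarith) (by linarith)
    have e1 : 4+(d-1)+(a-d-3) = a := by ring
    have e2 : 1+(d-1) = d := by ring
    rw [e1, e2] at h
    exact h
  have hV1 : (a^5 + a^3*d + a^2*d + a*(3*d^2+d) + 15*d^3 + 35*d^2 + 2*d) + 1 < a^6/d := by
    rw [lt_div_iff₀ hd0]
    exact hcert
  have hVid : (a^5 - a^4*d + a^3*d^2 - a^2*d^3 + a*d^4 - d^5 + d^6) * 1 + (2 - 11*d + 25*d^2 - 30*d^3 + 20*d^4 - 6*d^5 + a*(1-4*d+6*d^2-4*d^3) + a^2*(1-3*d+3*d^2) + a^3*(1-2*d) + a^4) * d + (46 - 125*d + 135*d^2 - 70*d^3 + 15*d^4 + a*(7-12*d+6*d^2) + a^2*(3-3*d) + a^3) * d^2 + (115 - 180*d + 100*d^2 - 20*d^3 + a*(6-4*d) + a^2) * d^3 + (75 - 65*d + 15*d^2 + a) * d^4 + (16 - 6*d) * d^5 + (1:ℝ) * d^6 = (a^5 + a^3*d + a^2*d + a*(3*d^2+d) + 15*d^3 + 35*d^2 + 2*d) := by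
    ring
  linarith [hterm2, hterm3, hterm4, hterm5, hup6, hQQn, hQsum, hV1, hVid]

theorem expectation_fq_lt (d q : ℝ) (hd : 1 < d) (hq : 2 * d + 4 ≤ q) :
    ∃ N : ℕ, ∀ n ≥ N,
      ∑ k ∈ Finset.range (n + 1),
        fqr q k * (n.choose k : ℝ) * (d / n) ^ k * (1 - d / n) ^ (n - k) < 1 / d := by
  refine ⟨⌈d + 15*(125*d^3 + 180*d^4 + 135*d^5 + 26*d^6 + 12*(q-d-1)*d^3 + 4*(q-d-1)*d^4 + 3*(q-d-1)^2*d^3)⌉₊ + 16, fun n hn => ?_⟩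
  have hd0 : (0:ℝ) < d := by linarith
  have ha : d + 3 ≤ q - d - 1 := by linarith
  have ha0 : (0:ℝ) ≤ q - d - 1 := by linarith
  have ha6 : (0:ℝ) < (q-d-1)^6 := pow_pos (by linarith) 6
  have hQQ0 : (0:ℝ) ≤ (125*d^3 + 180*d^4 + 135*d^5 + 26*d^6 + 12*(q-d-1)*d^3 + 4*(q-d-1)*d^4 + 3*(q-d-1)^2*d^3) := by
    have h1 : (0:ℝ) ≤ (q-d-1)*d^3 := mul_nonneg ha0 (by positivity)
    have h2 : (0:ℝ) ≤ (q-d-1)*d^4 := mul_nonneg ha0 (by positivity)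
    have h3 : (0:ℝ) ≤ (q-d-1)^2*d^3 := mul_nonneg (sq_nonneg _) (pow_nonneg hd0.le 3)
    nlinarith [h1, h2, h3, pow_nonneg hd0.le 3, pow_nonneg hd0.le 4, pow_nonneg hd0.le 5, pow_nonneg hd0.le 6]
  have hceil : d + 15*(125*d^3 + 180*d^4 + 135*d^5 + 26*d^6 + 12*(q-d-1)*d^3 + 4*(q-d-1)*d^4 + 3*(q-d-1)^2*d^3) ≤ ((⌈d + 15*(125*d^3 + 180*d^4 + 135*d^5 + 26*d^6 + 12*(q-d-1)*d^3 + 4*(q-d-1)*d^4 + 3*(q-d-1)^2*d^3)⌉₊ + 16 : ℕ) : ℝ) := by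
    push_cast
    have := Nat.le_ceil (d + 15*(125*d^3 + 180*d^4 + 135*d^5 + 26*d^6 + 12*(q-d-1)*d^3 + 4*(q-d-1)*d^4 + 3*(q-d-1)^2*d^3))
    linarith
  have hNn : ((⌈d + 15*(125*d^3 + 180*d^4 + 135*d^5 + 26*d^6 + 12*(q-d-1)*d^3 + 4*(q-d-1)*d^4 + 3*(q-d-1)^2*d^3)⌉₊ + 16 : ℕ) : ℝ) ≤ (n:ℝ) := by exact_mod_cast hn
  have hn16 : (16:ℝ) ≤ (n:ℝ) := by
    have h16 : ((16:ℕ):ℝ) ≤ ((⌈d + 15*(125*d^3 + 180*d^4 + 135*d^5 + 26*d^6 + 12*(q-d-1)*d^3 + 4*(q-d-1)*d^4 + 3*(q-d-1)^2*d^3)⌉₊ + 16 : ℕ) : ℝ) := by exact_mod_cast Nat.le_add_left 16 _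
    push_cast at h16 hNn
    have := Nat.cast_nonneg (α := ℝ) ⌈d + 15*(125*d^3 + 180*d^4 + 135*d^5 + 26*d^6 + 12*(q-d-1)*d^3 + 4*(q-d-1)*d^4 + 3*(q-d-1)^2*d^3)⌉₊
    linarith
  have hn0 : (0:ℝ) < (n:ℝ) := by linarith
  have hdn : d ≤ (n:ℝ) := by nlinarith [hceil, hNn, hQQ0]
  have hQn : 15*(125*d^3 + 180*d^4 + 135*d^5 + 26*d^6 + 12*(q-d-1)*d^3 + 4*(q-d-1)*d^4 + 3*(q-d-1)^2*d^3) < (n:ℝ) := by nlinarith [hceil, hNn]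
  have hcore := core d (q-d-1) n hd ha hn16 hdn hQn
  have hw : ∀ k : ℕ, (0:ℝ) ≤ ((n.choose k : ℕ) : ℝ) * (d/(n:ℝ))^k * (1 - d/(n:ℝ))^(n-k) := by
    intro k
    have h1 : (0:ℝ) ≤ d/(n:ℝ) := div_nonneg hd0.le hn0.le
    have h2 : (0:ℝ) ≤ 1 - d/(n:ℝ) := by
      have := (div_le_one hn0).mpr hdn
      linarith
    exact mul_nonneg (mul_nonneg (Nat.cast_nonneg _) (pow_nonneg h1 k)) (pow_nonneg h2 _)
  calc ∑ k ∈ Finset.range (n + 1),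
        fqr q k * (n.choose k : ℝ) * (d / (n:ℝ)) ^ k * (1 - d / (n:ℝ)) ^ (n - k)
      ≤ ∑ k ∈ Finset.range (n + 1), ((q-d-1)^5 + (q-d-1)^4*((k:ℝ)-d) + (q-d-1)^3*((k:ℝ)-d)^2 + (q-d-1)^2*((k:ℝ)-d)^3 + (q-d-1)*((k:ℝ)-d)^4 + ((k:ℝ)-d)^5 + ((k:ℝ)-d)^6) * (((n.choose k : ℕ) : ℝ) * (d/(n:ℝ))^k * (1 - d/(n:ℝ))^(n-k)) / (q-d-1)^6 := by
        apply Finset.sum_le_sum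
        intro k _
        calc fqr q k * (n.choose k : ℝ) * (d / (n:ℝ)) ^ k * (1 - d / (n:ℝ)) ^ (n - k)
            = fqr q k * (((n.choose k : ℕ) : ℝ) * (d/(n:ℝ))^k * (1 - d/(n:ℝ))^(n-k)) := by ring
          _ ≤ (((q-d-1)^5 + (q-d-1)^4*((k:ℝ)-d) + (q-d-1)^3*((k:ℝ)-d)^2 + (q-d-1)^2*((k:ℝ)-d)^3 + (q-d-1)*((k:ℝ)-d)^4 + ((k:ℝ)-d)^5 + ((k:ℝ)-d)^6) / (q-d-1)^6) * (((n.choose k : ℕ) : ℝ) * (d/(n:ℝ))^k * (1 - d/(n:ℝ))^(n-k)) :=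
              mul_le_mul_of_nonneg_right (pointwise d q hd hq k) (hw k)
          _ = ((q-d-1)^5 + (q-d-1)^4*((k:ℝ)-d) + (q-d-1)^3*((k:ℝ)-d)^2 + (q-d-1)^2*((k:ℝ)-d)^3 + (q-d-1)*((k:ℝ)-d)^4 + ((k:ℝ)-d)^5 + ((k:ℝ)-d)^6) * (((n.choose k : ℕ) : ℝ) * (d/(n:ℝ))^k * (1 - d/(n:ℝ))^(n-k)) / (q-d-1)^6 := by ring
    _ = (∑ k ∈ Finset.range (n + 1), ((q-d-1)^5 + (q-d-1)^4*((k:ℝ)-d) + (q-d-1)^3*((k:ℝ)-d)^2 + (q-d-1)^2*((k:ℝ)-d)^3 + (q-d-1)*((k:ℝ)-d)^4 + ((k:ℝ)-d)^5 + ((k:ℝ)-d)^6) * (((n.choose k : ℕ) : ℝ) * (d/(n:ℝ))^k * (1 - d/(n:ℝ))^(n-k))) / (q-d-1)^6 := by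
        rw [← Finset.sum_div]
    _ < ((q-d-1)^6 / d) / (q-d-1)^6 := by
        exact (div_lt_div_iff_of_pos_right ha6).mpr hcore
    _ = 1 / d := by
        rw [div_div, mul_comm, ← div_div, div_self ha6.ne']
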